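/- Let E, F, G, L, M, N and x, y be real numbers with EG − F² ≠ 0, and set K = (LN − M²)/(EG − F²) and H = (EN − 2FM + GL)/(2(EG − F²)). If (L(GL − EN) + 2M(EM − FL))·x² + 2(M(GL + EN) − 2FLN)·xy + (N(EN − GL) + 2M(GM − FN))·y² = 0, then H·(Lx² + 2Mxy + Ny²) = K·(Ex² + 2Fxy + Gy²). In particular, if additionally Ex² + 2Fxy + Gy² ≠ 0 and H ≠ 0, then (Lx² + 2Mxy + Ny²)/(Ex² + 2Fxy + Gy²) = K/H. -/

import Mathlib

/-- Along a solution direction `(x,y)` of the characteristic-curve BDE, the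
normal curvature equals `K/H`, the harmonic mean of the principal
curvatures. -/
theorem stmt_15 (E F G L M N x y K H : ℝ) (hEG : E * G - F ^ 2 ≠ 0)
    (hK : K = (L * N - M ^ 2) / (E * G - F ^ 2))
    (hH : H = (E * N - 2 * F * M + G * L) / (2 * (E * G - F ^ 2)))
    (hch : (L * (G * L - E * N) + 2 * M * (E * M - F * L)) * x ^ 2
        + 2 * (M * (G * L + E * N) - 2 * F * L * N) * x * y
        + (N * (E * N - G * L) + 2 * M * (G * M - F * N)) * y ^ 2 = 0) :
    H * (L * x ^ 2 + 2 * M * x * y + N * y ^ 2)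
        = K * (E * x ^ 2 + 2 * F * x * y + G * y ^ 2)
    ∧ (E * x ^ 2 + 2 * F * x * y + G * y ^ 2 ≠ 0 → H ≠ 0 →
        (L * x ^ 2 + 2 * M * x * y + N * y ^ 2)
            / (E * x ^ 2 + 2 * F * x * y + G * y ^ 2) = K / H) := by
  have h1 : H * (L * x ^ 2 + 2 * M * x * y + N * y ^ 2)
      = K * (E * x ^ 2 + 2 * F * x * y + G * y ^ 2) := by
    subst hK hH
    rw [div_mul_eq_mul_div, div_mul_eq_mul_div, div_eq_div_iff (mul_ne_zero two_ne_zero hEG) hEG]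
    linear_combination (E * G - F ^ 2) * hch
  refine ⟨h1, fun hI hH0 => ?_⟩
  rw [div_eq_div_iff hI hH0]
  linear_combination h1
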